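/- For every t > 0, η(t) ≤ √(2/π) ∫_{t/2}^∞ exp(−z²/2) dz. -/

import Mathlib

open MeasureTheory ProbabilityTheory Real Set

/-- `η(t) = E_{z∼N(0,1)} [1 / (1 + exp(t²/2 − t z))]`. -/
noncomputable def eta (t : ℝ) : ℝ :=
  ∫ z, (1 + Real.exp (t ^ 2 / 2 - t * z))⁻¹ ∂ gaussianReal 0 1

/-- For every `t > 0`, `η(t) ≤ √(2/π) ∫_{t/2}^∞ exp(−z²/2) dz`. -/
theorem eta_le_gaussian_tail (t : ℝ) (ht : 0 < t) :
    eta t ≤ Real.sqrt (2 / π) * ∫ z in Set.Ioi (t / 2), Real.exp (-z ^ 2 / 2) := by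
  set f : ℝ → ℝ := fun z => (1 + Real.exp (t ^ 2 / 2 - t * z))⁻¹ with hf
  have hfpos : ∀ z, 0 < 1 + Real.exp (t ^ 2 / 2 - t * z) := fun z => by positivity
  have hf01 : ∀ z, 0 < f z ∧ f z ≤ 1 := by
    intro z
    constructor
    · exact inv_pos.mpr (hfpos z)
    · rw [hf]
      simp only
      rw [inv_le_one_iff₀]
      right
      linarith [Real.exp_pos (t ^ 2 / 2 - t * z)]
  -- integrability of gaussians
  have hg : Integrable (fun z : ℝ => Real.exp (-z ^ 2 / 2)) := by
    have h := integrable_exp_neg_mul_sq (show (0:ℝ) < 1/2 by norm_num)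
    convert h using 2 with z
    ring
  have hg' : Integrable (fun z : ℝ => Real.exp (-(z - t) ^ 2 / 2)) := by
    have := hg.comp_sub_right t
    simpa using this
  have hfcont : Continuous f := by
    apply Continuous.inv₀
    · continuity
    · exact fun z => ne_of_gt (hfpos z)
  -- integrability of main integrand
  have hint : Integrable (fun z : ℝ => Real.exp (-z ^ 2 / 2) * f z) := by
    apply hg.mono' (((continuous_neg.comp (continuous_pow 2)).div_const 2).rexp.mul hfcont).aestronglyMeasurable
    filter_upwards with z
    show ‖Real.exp (-z ^ 2 / 2) * f z‖ ≤ Real.exp (-z ^ 2 / 2)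
    rw [Real.norm_eq_abs, abs_of_nonneg (mul_nonneg (Real.exp_pos _).le (hf01 z).1.le)]
    calc Real.exp (-z ^ 2 / 2) * f z ≤ Real.exp (-z ^ 2 / 2) * 1 := by
          exact mul_le_mul_of_nonneg_left (hf01 z).2 (le_of_lt (Real.exp_pos _))
      _ = Real.exp (-z ^ 2 / 2) := mul_one _
  -- pointwise bound on Iic
  have hb1 : ∀ z : ℝ, Real.exp (-z ^ 2 / 2) * f z ≤ Real.exp (-(z - t) ^ 2 / 2) := by
    intro z
    have h1 : f z ≤ Real.exp (-(t ^ 2 / 2 - t * z)) := by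
      rw [hf, Real.exp_neg]
      simp only
      apply inv_anti₀ (Real.exp_pos _)
      linarith
    calc Real.exp (-z ^ 2 / 2) * f z
        ≤ Real.exp (-z ^ 2 / 2) * Real.exp (-(t ^ 2 / 2 - t * z)) :=
          mul_le_mul_of_nonneg_left h1 (le_of_lt (Real.exp_pos _))
      _ = Real.exp (-(z - t) ^ 2 / 2) := by rw [← Real.exp_add]; ring_nf
  -- split
  have hsplit : (∫ z, Real.exp (-z ^ 2 / 2) * f z)
      = (∫ z in Iic (t/2), Real.exp (-z ^ 2 / 2) * f z)
        + ∫ z in Ioi (t/2), Real.exp (-z ^ 2 / 2) * f z := by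
    rw [← integral_add_compl measurableSet_Iic hint, compl_Iic]
  -- piece 1
  have hp1 : (∫ z in Iic (t/2), Real.exp (-z ^ 2 / 2) * f z)
      ≤ ∫ z in Iic (t/2), Real.exp (-(z - t) ^ 2 / 2) := by
    apply setIntegral_mono_on hint.integrableOn hg'.integrableOn measurableSet_Iic
    intro z _
    exact hb1 z
  -- translation
  have htrans : (∫ z in Iic (t/2), Real.exp (-(z - t) ^ 2 / 2))
      = ∫ z in Iic (-(t/2)), Real.exp (-z ^ 2 / 2) := by
    have hmp : MeasurePreserving (fun x : ℝ => x + t) volume volume :=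
      measurePreserving_add_right volume t
    have hemb : MeasurableEmbedding (fun x : ℝ => x + t) :=
      (Homeomorph.addRight t).isClosedEmbedding.measurableEmbedding
    have := hmp.setIntegral_preimage_emb hemb
      (fun z => Real.exp (-(z - t) ^ 2 / 2)) (Iic (t/2))
    rw [← this]
    have hpre : (fun x : ℝ => x + t) ⁻¹' Iic (t/2) = Iic (t/2 - t) := by
      ext x; simp [le_sub_iff_add_le]
    rw [hpre]
    have : t/2 - t = -(t/2) := by ring
    rw [this]
    congr 1 with x
    ring_nf
  -- reflection
  have hrefl : (∫ z in Iic (-(t/2)), Real.exp (-z ^ 2 / 2))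
      = ∫ z in Ioi (t/2), Real.exp (-z ^ 2 / 2) := by
    have := integral_comp_neg_Iic (-(t/2)) (fun z => Real.exp (-z ^ 2 / 2))
    rw [neg_neg] at this
    rw [← this]
    congr 1 with z
    ring_nf
  -- piece 2
  have hp2 : (∫ z in Ioi (t/2), Real.exp (-z ^ 2 / 2) * f z)
      ≤ ∫ z in Ioi (t/2), Real.exp (-z ^ 2 / 2) := by
    apply setIntegral_mono_on hint.integrableOn hg.integrableOn measurableSet_Ioi
    intro z _
    calc Real.exp (-z ^ 2 / 2) * f z ≤ Real.exp (-z ^ 2 / 2) * 1 :=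
        mul_le_mul_of_nonneg_left (hf01 z).2 (le_of_lt (Real.exp_pos _))
      _ = _ := mul_one _
  have hmain : (∫ z, Real.exp (-z ^ 2 / 2) * f z)
      ≤ 2 * ∫ z in Ioi (t/2), Real.exp (-z ^ 2 / 2) := by
    rw [hsplit, two_mul]
    exact add_le_add (hp1.trans (le_of_eq (htrans.trans hrefl))) hp2
  have h1 : eta t = ∫ z, gaussianPDFReal 0 1 z * f z := by
    rw [eta, gaussianReal_of_var_ne_zero 0 one_ne_zero]
    have h2 : gaussianPDF 0 1 = fun x => ((gaussianPDFReal 0 1 x).toNNReal : ENNReal) := rfl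
    rw [h2, integral_withDensity_eq_integral_smul
      ((measurable_gaussianPDFReal 0 1).real_toNNReal)]
    congr 1; ext z
    rw [NNReal.smul_def, smul_eq_mul, Real.coe_toNNReal _ (gaussianPDFReal_nonneg 0 1 z)]
  have hpdf : ∀ z : ℝ, gaussianPDFReal 0 1 z = (Real.sqrt (2*π))⁻¹ * Real.exp (-z ^ 2 / 2) := by
    intro z
    rw [gaussianPDFReal]
    norm_num
  have hc : Real.sqrt (2/π) = 2 * (Real.sqrt (2*π))⁻¹ := by
    have h4 : Real.sqrt 4 = 2 := by
      rw [show (4:ℝ) = 2^2 by norm_num, Real.sqrt_sq (by norm_num : (0:ℝ) ≤ 2)]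
    have : (2/π : ℝ) = 4/(2*π) := by
      field_simp
      ring
    rw [this, Real.sqrt_div (by norm_num : (0:ℝ) ≤ 4), h4, div_eq_mul_inv]
  calc eta t = ∫ z, gaussianPDFReal 0 1 z * f z := h1
    _ = ∫ z, (Real.sqrt (2*π))⁻¹ * (Real.exp (-z ^ 2 / 2) * f z) := by
        congr 1; ext z; rw [hpdf z, mul_assoc]
    _ = (Real.sqrt (2*π))⁻¹ * ∫ z, Real.exp (-z ^ 2 / 2) * f z := integral_const_mul _ _
    _ ≤ (Real.sqrt (2*π))⁻¹ * (2 * ∫ z in Ioi (t/2), Real.exp (-z ^ 2 / 2)) := by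
        apply mul_le_mul_of_nonneg_left hmain
        positivity
    _ = Real.sqrt (2/π) * ∫ z in Set.Ioi (t/2), Real.exp (-z ^ 2 / 2) := by
        rw [hc]; ring
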